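/- Let (X,d) be an ultrametric space, let r > 0, and let μ, ν ∈ J_ω(X). Then d̂(μ,ν) < r if and only if J_ω(q_r)(μ) = J_ω(q_r)(ν). -/
import Mathlib


open scoped ENNReal

noncomputable section

/-- A metric is an *ultrametric* if the strong triangle inequality holds. -/
def IsUltra (X : Type*) [MetricSpace X] : Prop :=
  ∀ x y z : X, dist x y ≤ max (dist x z) (dist z y)

/-- `mmOf x α` is the max-min functional `∨ᵢ αᵢ ∧ δ_{x i}`,
`φ ↦ maxᵢ min (α i) (φ (x i))` (computed in the extended reals). -/
def mmOf {A : Type*} {n : ℕ} (x : Fin (n + 1) → A) (α : Fin (n + 1) → EReal) :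
    (A → ℝ) → ℝ :=
  fun φ => (⨆ i, min (α i) ((φ (x i) : EReal))).toReal

/-- `μ` is a max-min measure of finite support, with support contained in `S`. -/
def IsMMOn {A : Type*} (S : Set A) (μ : (A → ℝ) → ℝ) : Prop :=
  ∃ (n : ℕ) (x : Fin (n + 1) → A) (α : Fin (n + 1) → EReal),
    (∀ i, x i ∈ S) ∧ (∃ i, α i = ⊤) ∧ μ = mmOf x α

/-- `μ` is a max-min measure of finite support. -/
def IsMM {A : Type*} (μ : (A → ℝ) → ℝ) : Prop :=
  IsMMOn Set.univ μ

/-- `idemOf x α` is the idempotent measure `∨ᵢ αᵢ ⊙ δ_{x i}`,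
`φ ↦ maxᵢ (α i + φ (x i))` (computed in the extended reals). -/
def idemOf {A : Type*} {n : ℕ} (x : Fin (n + 1) → A) (α : Fin (n + 1) → EReal) :
    (A → ℝ) → ℝ :=
  fun φ => (⨆ i, (α i + (φ (x i) : EReal))).toReal

/-- `μ` is an idempotent measure of finite support, with support contained in `S`. -/
def IsIdemOn {A : Type*} (S : Set A) (μ : (A → ℝ) → ℝ) : Prop :=
  ∃ (n : ℕ) (x : Fin (n + 1) → A) (α : Fin (n + 1) → EReal),
    (∀ i, x i ∈ S) ∧ (∀ i, α i ≤ 0) ∧ (∃ i, α i = 0) ∧ μ = idemOf x α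

/-- `μ` is an idempotent measure of finite support. -/
def IsIdem {A : Type*} (μ : (A → ℝ) → ℝ) : Prop :=
  IsIdemOn Set.univ μ

/-- The Dirac measure `δ_a`. -/
def dirac {A : Type*} (a : A) : (A → ℝ) → ℝ := fun φ => φ a

/-- `FrE e r φ`: the function `φ` is constant on every open `r`-ball of the
(extended-valued) distance `e`; this is the family `𝓕_r`. -/
def FrE {A : Type*} (e : A → A → ℝ≥0∞) (r : ℝ≥0∞) (φ : A → ℝ) : Prop :=
  ∀ x y : A, e x y < r → φ x = φ y

/-- The ultrametric `d̂` on functionals: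
`d̂(μ,ν) = inf {r > 0 ∣ μ φ = ν φ for every φ ∈ 𝓕_r}`. -/
def dHatE {A : Type*} (e : A → A → ℝ≥0∞) (μ ν : (A → ℝ) → ℝ) : ℝ≥0∞ :=
  sInf {r : ℝ≥0∞ | 0 < r ∧ ∀ φ : A → ℝ, FrE e r φ → μ φ = ν φ}

/-- The pushforward `J_ω(f)` of functionals along `f`. -/
def Jmap {A B : Type*} (f : A → B) (μ : (A → ℝ) → ℝ) : (B → ℝ) → ℝ :=
  fun φ => μ (φ ∘ f)

/-- The extended distance of a metric space, as a two-variable function. -/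
def eD (X : Type*) [PseudoEMetricSpace X] : X → X → ℝ≥0∞ :=
  fun x y => edist x y

/-- The monad multiplication (`ξ` for max-min measures, `ζ` for idempotent
measures): `mult M φ = M (μ ↦ μ φ)`. -/
def mult {A : Type*} (M : (((A → ℝ) → ℝ) → ℝ) → ℝ) : (A → ℝ) → ℝ :=
  fun φ => M fun μ => μ φ



lemma mmOf_congr {A : Type*} {n : ℕ} (x : Fin (n + 1) → A) (α : Fin (n + 1) → EReal)
    {φ φ' : A → ℝ} (h : ∀ i, φ (x i) = φ' (x i)) : mmOf x α φ = mmOf x α φ' := by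
  unfold mmOf
  congr 1
  exact iSup_congr fun i => by rw [h i]

/-- For an ultrametric space `(X,d)`, `r > 0` and
`μ, ν ∈ J_ω(X)`: `d̂(μ,ν) < r` iff `J_ω(q_r)(μ) = J_ω(q_r)(ν)`, where
`q_r : X → X/𝒪_r` is the quotient map identifying points at distance `< r`
(formalized as any map `q` whose fibres are exactly the open `r`-balls). -/
theorem dHat_lt_iff_quotient_pushforwards_eq {X : Type*} [MetricSpace X]
    (hX : IsUltra X) {r : ℝ} (hr : 0 < r)
    {Q : Type*} (q : X → Q) (hq : ∀ a b : X, q a = q b ↔ dist a b < r)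
    (μ ν : (X → ℝ) → ℝ) (hμ : IsMM μ) (hν : IsMM ν) :
    dHatE (eD X) μ ν < ENNReal.ofReal r ↔ Jmap q μ = Jmap q ν := by
  constructor
  · rintro hlt
    obtain ⟨s, ⟨hs0, hs⟩, hslt⟩ := (sInf_lt_iff).mp hlt
    funext ψ
    apply hs
    intro a b hab
    have hdist : dist a b < r := by
      have : ENNReal.ofReal (dist a b) < ENNReal.ofReal r := by
        rw [← edist_dist]; exact lt_trans hab hslt
      exact ((ENNReal.ofReal_lt_ofReal_iff hr).mp this)
    simp [Function.comp, (hq a b).mpr hdist]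
  · intro hJ
    obtain ⟨n, x, α, -, -, hμe⟩ := hμ
    obtain ⟨m, y, β, -, -, hνe⟩ := hν
    set pt : Fin (n + 1) ⊕ Fin (m + 1) → X := Sum.elim x y with hpt
    have hne : (Finset.univ : Finset ((Fin (n+1) ⊕ Fin (m+1)) × (Fin (n+1) ⊕ Fin (m+1)))).Nonempty :=
      Finset.univ_nonempty
    set M : ℝ := Finset.univ.sup' hne
      (fun p => if dist (pt p.1) (pt p.2) < r then dist (pt p.1) (pt p.2) else 0) with hM
    have hM0 : 0 ≤ M := by
      refine le_trans ?_ (Finset.le_sup' _ (Finset.mem_univ (Sum.inl 0, Sum.inl 0)))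
      split <;> simp [dist_nonneg]
    have hMr : M < r := by
      refine Finset.sup'_lt_iff hne |>.mpr fun p _ => ?_
      split
      · assumption
      · exact hr
    have hle : ∀ i j, dist (pt i) (pt j) < r → dist (pt i) (pt j) ≤ M := by
      intro i j hij
      refine le_trans ?_ (Finset.le_sup' _ (Finset.mem_univ (i, j)))
      rw [if_pos hij]
    set r' : ℝ := (M + r) / 2 with hr'
    have hr'0 : 0 < r' := by positivity
    have hMr' : M < r' := by simp only [hr']; linarith
    have hr'r : r' < r := by simp only [hr']; linarith
    have hmem : ENNReal.ofReal r' ∈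
        {s : ℝ≥0∞ | 0 < s ∧ ∀ φ : X → ℝ, FrE (eD X) s φ → μ φ = ν φ} := by
      refine ⟨ENNReal.ofReal_pos.mpr hr'0, fun φ hφ => ?_⟩
      classical
      set ψ : Q → ℝ := fun c => if h : ∃ i, q (pt i) = c then φ (pt h.choose) else 0 with hψ
      have hψq : ∀ j, ψ (q (pt j)) = φ (pt j) := by
        intro j
        have h : ∃ i, q (pt i) = q (pt j) := ⟨j, rfl⟩
        have hch : q (pt h.choose) = q (pt j) := h.choose_spec
        have hd : dist (pt h.choose) (pt j) < r := (hq _ _).mp hch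
        have : φ (pt h.choose) = φ (pt j) := by
          apply hφ
          rw [eD, edist_dist]
          exact lt_of_le_of_lt (ENNReal.ofReal_le_ofReal (hle _ _ hd))
            (ENNReal.ofReal_lt_ofReal_iff hr'0 |>.mpr hMr')
        simp only [hψ, dif_pos h, this]
      have hμφ : μ φ = μ (ψ ∘ q) := by
        rw [hμe]
        exact mmOf_congr x α fun i => (hψq (Sum.inl i)).symm
      have hνφ : ν φ = ν (ψ ∘ q) := by
        rw [hνe]
        exact mmOf_congr y β fun i => (hψq (Sum.inr i)).symm
      rw [hμφ, hνφ]
      exact congrFun hJ ψ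
    calc dHatE (eD X) μ ν ≤ ENNReal.ofReal r' := sInf_le hmem
      _ < ENNReal.ofReal r := (ENNReal.ofReal_lt_ofReal_iff hr).mpr hr'r


end
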